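/- arXiv:2205.08633 — 4 statements merged into one kernel-verified Lean document; each statement's English description precedes it below -/
import Mathlib

section
/- Let (Ω, P) be a probability space, X : Ω → ℝ^d a random vector, Y : Ω → {−1, 1} a random variable, and f* a fixed measurable function with f*(X) a version of E[Y | X]. Let f : ℝ^d → ℝ be measurable with P(f(X) = 0) = 0, and suppose f*(X) ∈ L²(P). Then for every measurable g : ℝ^d → ℝ with g(X) ∈ L²(P) and sign g(X) = sign f(X) almost surely, P(sign f(X) ≠ Y) − P(sign f*(X) ≠ Y) ≤ (E[(g(X) − f*(X))²])^{1/2}. Consequently the excess classification risk of f is at most the infimum of (E[(g(X) − f*(X))²])^{1/2} over all such g. -/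
open MeasureTheory RealInnerProductSpace

/-- sign: `1` if `z > 0`, `-1` if `z ≤ 0`. -/
noncomputable def sgn (z : ℝ) : ℝ := if 0 < z then 1 else -1

lemma measurable_sgn : Measurable sgn := by
  unfold sgn
  exact Measurable.ite measurableSet_Ioi measurable_const measurable_const

lemma sgn_val (z : ℝ) : sgn z = 1 ∨ sgn z = -1 := by
  unfold sgn; split_ifs <;> simp

lemma sgn_sgn (z : ℝ) : sgn (sgn z) = sgn z := by
  unfold sgn; split_ifs <;> norm_num at *

lemma sgn_abs_le (z : ℝ) : |sgn z| ≤ 1 := by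
  unfold sgn; split_ifs <;> norm_num

lemma ind_sub_ind (a b y : ℝ) (ha : a = 1 ∨ a = -1) (hb : b = 1 ∨ b = -1)
    (hy : y = 1 ∨ y = -1) :
    (if a ≠ y then (1:ℝ) else 0) - (if b ≠ y then (1:ℝ) else 0) = (b - a) / 2 * y := by
  rcases ha with rfl | rfl <;> rcases hb with rfl | rfl <;> rcases hy with rfl | rfl <;> norm_num

lemma key_ineq (u v : ℝ) : (sgn v - sgn u) / 2 * v ≤ |u - v| := by
  have h1 := le_abs_self (u - v)
  have h2 := neg_abs_le (u - v)
  unfold sgn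
  split_ifs with hv hu hu <;> norm_num <;> linarith

lemma L1_le_L2 {Ω : Type*} [MeasurableSpace Ω] (P : Measure Ω) [IsProbabilityMeasure P]
    (u : Ω → ℝ) (hu : MemLp u 2 P) :
    ∫ ω, |u ω| ∂P ≤ (∫ ω, u ω ^ 2 ∂P) ^ (1 / 2 : ℝ) := by
  have hpq : Real.HolderConjugate 2 2 := by
    rw [Real.holderConjugate_iff]; norm_num
  have h2 : ENNReal.ofReal (2:ℝ) = 2 := by
    simp [ENNReal.ofReal_ofNat]
  have habs : MemLp (fun ω => |u ω|) (ENNReal.ofReal (2:ℝ)) P := by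
    rw [h2]; simpa [Real.norm_eq_abs] using hu.norm
  have hone : MemLp (fun _ : Ω => (1:ℝ)) (ENNReal.ofReal (2:ℝ)) P := by
    rw [h2]; exact memLp_const 1
  have key := integral_mul_le_Lp_mul_Lq_of_nonneg hpq
    (Filter.Eventually.of_forall fun ω => abs_nonneg (u ω))
    (Filter.Eventually.of_forall fun _ => zero_le_one) habs hone
  simp only [mul_one, Real.one_rpow] at key
  have heq : ∫ a, |u a| ^ (2:ℝ) ∂P = ∫ a, u a ^ 2 ∂P := by
    refine integral_congr_ae (Filter.Eventually.of_forall fun a => ?_)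
    show |u a| ^ (2:ℝ) = u a ^ 2
    rw [show ((2:ℝ)) = ((2:ℕ) : ℝ) by norm_num, Real.rpow_natCast, sq_abs]
  rw [heq] at key
  simpa [measure_univ, Real.one_rpow] using key

/-- The excess classification risk of `f` is bounded by `‖g(X) − f*(X)‖_{L²}` for every
square-integrable `g` with `sign g(X) = sign f(X)` a.s., and hence by the infimum of these
quantities. -/
theorem excess_risk_le_sq_loss {d : ℕ} {Ω : Type*} [MeasurableSpace Ω]
    (P : Measure Ω) [IsProbabilityMeasure P]
    (X : Ω → EuclideanSpace ℝ (Fin d)) (hX : Measurable X)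
    (Y : Ω → ℝ) (hY : Measurable Y) (hYval : ∀ ω, Y ω = 1 ∨ Y ω = -1)
    (fstar : EuclideanSpace ℝ (Fin d) → ℝ) (hfstar : Measurable fstar)
    (hcond : (fun ω => fstar (X ω)) =ᵐ[P] P[Y | MeasurableSpace.comap X inferInstance])
    (hfstarL2 : MemLp (fun ω => fstar (X ω)) 2 P)
    (f : EuclideanSpace ℝ (Fin d) → ℝ) (hf : Measurable f)
    (hf0 : P {ω | f (X ω) = 0} = 0) :
    (∀ g : EuclideanSpace ℝ (Fin d) → ℝ, Measurable g →
        MemLp (fun ω => g (X ω)) 2 P →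
        (∀ᵐ ω ∂P, sgn (g (X ω)) = sgn (f (X ω))) →
        (P {ω | sgn (f (X ω)) ≠ Y ω}).toReal - (P {ω | sgn (fstar (X ω)) ≠ Y ω}).toReal
          ≤ (∫ ω, (g (X ω) - fstar (X ω)) ^ 2 ∂P) ^ (1 / 2 : ℝ)) ∧
    (P {ω | sgn (f (X ω)) ≠ Y ω}).toReal - (P {ω | sgn (fstar (X ω)) ≠ Y ω}).toReal
      ≤ sInf {r : ℝ | ∃ g : EuclideanSpace ℝ (Fin d) → ℝ, Measurable g ∧
          MemLp (fun ω => g (X ω)) 2 P ∧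
          (∀ᵐ ω ∂P, sgn (g (X ω)) = sgn (f (X ω))) ∧
          r = (∫ ω, (g (X ω) - fstar (X ω)) ^ 2 ∂P) ^ (1 / 2 : ℝ)} := by
  have hm : MeasurableSpace.comap X inferInstance ≤ ‹MeasurableSpace Ω› := hX.comap_le
  -- the multiplier function
  set H : Ω → ℝ := fun ω => (sgn (fstar (X ω)) - sgn (f (X ω))) / 2 with hH_def
  have hXm : Measurable[MeasurableSpace.comap X inferInstance] X := fun s hs => ⟨s, hs, rfl⟩
  have hHm : StronglyMeasurable[MeasurableSpace.comap X inferInstance] H := by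
    apply Measurable.stronglyMeasurable
    exact (((measurable_sgn.comp hfstar).comp hXm).sub
      ((measurable_sgn.comp hf).comp hXm)).div_const 2
  have hHbd : ∀ ω, |H ω| ≤ 1 := by
    intro ω
    have h1 := sgn_abs_le (fstar (X ω))
    have h2 := sgn_abs_le (f (X ω))
    rw [hH_def]
    rw [abs_div, abs_of_nonneg (by norm_num : (0:ℝ) ≤ 2), div_le_one (by norm_num)]
    calc |sgn (fstar (X ω)) - sgn (f (X ω))| ≤ |sgn (fstar (X ω))| + |sgn (f (X ω))| :=
          abs_sub _ _
      _ ≤ 2 := by linarith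
  have hHaesm : AEStronglyMeasurable H P := (hHm.mono hm).aestronglyMeasurable
  have hYint : Integrable Y P := by
    refine (integrable_const (1:ℝ)).mono' hY.aestronglyMeasurable ?_
    refine Filter.Eventually.of_forall fun ω => ?_
    rcases hYval ω with h | h <;> simp [h]
  have hfstarInt : Integrable (fun ω => fstar (X ω)) P := hfstarL2.integrable one_le_two
  have hSf : MeasurableSet {ω | sgn (f (X ω)) ≠ Y ω} :=
    (measurableSet_eq_fun (measurable_sgn.comp (hf.comp hX)) hY).compl
  have hSfstar : MeasurableSet {ω | sgn (fstar (X ω)) ≠ Y ω} :=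
    (measurableSet_eq_fun (measurable_sgn.comp (hfstar.comp hX)) hY).compl
  have hkey : (P {ω | sgn (f (X ω)) ≠ Y ω}).toReal - (P {ω | sgn (fstar (X ω)) ≠ Y ω}).toReal
      = ∫ ω, H ω * fstar (X ω) ∂P := by
    have e1 : (P {ω | sgn (f (X ω)) ≠ Y ω}).toReal
        = ∫ ω, Set.indicator {ω | sgn (f (X ω)) ≠ Y ω} 1 ω ∂P :=
      (integral_indicator_one hSf).symm
    have e2 : (P {ω | sgn (fstar (X ω)) ≠ Y ω}).toReal
        = ∫ ω, Set.indicator {ω | sgn (fstar (X ω)) ≠ Y ω} 1 ω ∂P :=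
      (integral_indicator_one hSfstar).symm
    have i1 : Integrable (Set.indicator {ω | sgn (f (X ω)) ≠ Y ω} (1 : Ω → ℝ)) P := by
      rw [integrable_indicator_iff hSf]
      exact (integrable_const 1).integrableOn
    have i2 : Integrable (Set.indicator {ω | sgn (fstar (X ω)) ≠ Y ω} (1 : Ω → ℝ)) P := by
      rw [integrable_indicator_iff hSfstar]
      exact (integrable_const 1).integrableOn
    have hHY : (fun ω => Set.indicator {ω | sgn (f (X ω)) ≠ Y ω} 1 ω
        - Set.indicator {ω | sgn (fstar (X ω)) ≠ Y ω} 1 ω) = fun ω => H ω * Y ω := by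
      funext ω
      simp only [Set.indicator_apply, Set.mem_setOf_eq, Pi.one_apply, hH_def]
      exact ind_sub_ind _ _ _ (sgn_val _) (sgn_val _) (hYval ω)
    rw [e1, e2, ← integral_sub i1 i2, hHY]
    have hpull : P[fun ω => H ω * Y ω | MeasurableSpace.comap X inferInstance]
        =ᵐ[P] fun ω => H ω * (P[Y | MeasurableSpace.comap X inferInstance]) ω := by
      have := condExp_stronglyMeasurable_mul_of_bound hm hHm hYint 1
        (Filter.Eventually.of_forall fun ω => by simpa [Real.norm_eq_abs] using hHbd ω)
      exact this
    calc ∫ ω, H ω * Y ω ∂P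
        = ∫ ω, (P[fun ω => H ω * Y ω | MeasurableSpace.comap X inferInstance]) ω ∂P :=
          (integral_condExp hm).symm
      _ = ∫ ω, H ω * (P[Y | MeasurableSpace.comap X inferInstance]) ω ∂P :=
          integral_congr_ae hpull
      _ = ∫ ω, H ω * fstar (X ω) ∂P := by
          refine integral_congr_ae ?_
          filter_upwards [hcond] with ω hω
          rw [hω]
  -- part 1
  have part1 : ∀ g : EuclideanSpace ℝ (Fin d) → ℝ, Measurable g →
      MemLp (fun ω => g (X ω)) 2 P →
      (∀ᵐ ω ∂P, sgn (g (X ω)) = sgn (f (X ω))) →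
      (P {ω | sgn (f (X ω)) ≠ Y ω}).toReal - (P {ω | sgn (fstar (X ω)) ≠ Y ω}).toReal
        ≤ (∫ ω, (g (X ω) - fstar (X ω)) ^ 2 ∂P) ^ (1 / 2 : ℝ) := by
    intro g hg hgL2 hsign
    rw [hkey]
    have huL2 : MemLp (fun ω => g (X ω) - fstar (X ω)) 2 P := hgL2.sub hfstarL2
    have habsint : Integrable (fun ω => |g (X ω) - fstar (X ω)|) P :=
      (huL2.integrable one_le_two).abs
    have hHfint : Integrable (fun ω => H ω * fstar (X ω)) P :=
      hfstarInt.bdd_mul hHaesm (c := 1) (Filter.Eventually.of_forall fun ω => by simpa [Real.norm_eq_abs] using hHbd ω)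
    have step1 : ∫ ω, H ω * fstar (X ω) ∂P ≤ ∫ ω, |g (X ω) - fstar (X ω)| ∂P := by
      refine integral_mono_ae hHfint habsint ?_
      filter_upwards [hsign] with ω hω
      rw [hH_def]
      simp only [← hω]
      exact key_ineq (g (X ω)) (fstar (X ω))
    exact step1.trans (L1_le_L2 P _ huL2)
  refine ⟨part1, ?_⟩
  have hne : {r : ℝ | ∃ g : EuclideanSpace ℝ (Fin d) → ℝ, Measurable g ∧
      MemLp (fun ω => g (X ω)) 2 P ∧
      (∀ᵐ ω ∂P, sgn (g (X ω)) = sgn (f (X ω))) ∧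
      r = (∫ ω, (g (X ω) - fstar (X ω)) ^ 2 ∂P) ^ (1 / 2 : ℝ)}.Nonempty := by
    refine ⟨_, fun x => sgn (f x), measurable_sgn.comp hf, ?_, ?_, rfl⟩
    · refine MemLp.of_bound ((measurable_sgn.comp (hf.comp hX))).aestronglyMeasurable 1 ?_
      exact Filter.Eventually.of_forall fun ω => by
        simpa [Real.norm_eq_abs] using sgn_abs_le (f (X ω))
    · exact Filter.Eventually.of_forall fun ω => sgn_sgn (f (X ω))
  refine le_csInf hne ?_
  rintro r ⟨g, hg1, hg2, hg3, rfl⟩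
  exact part1 g hg1 hg2 hg3
end

section
/- Let (Ω, P) be a probability space, X : Ω → ℝ^d a random vector, Y : Ω → {−1, 1} a random variable, and f* a fixed measurable function with f*(X) a version of E[Y | X], f*(X) ∈ L²(P). Let f : ℝ^d → ℝ be measurable with P(f(X) = 0) = 0 and f(X) ∈ L²(P). Then P(sign f(X) ≠ Y) − P(sign f*(X) ≠ Y) ≤ inf over t > 0 of (E[(t·f(X) − f*(X))²])^{1/2}. In particular, when E[f(X) f*(X)] > 0 this infimum equals ‖f*(X)‖_{L²(P)} · sin θ_{2,P}(f, f*). -/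
open MeasureTheory RealInnerProductSpace

lemma excess_aux {Ω : Type*} [MeasurableSpace Ω] (P : Measure Ω) [IsProbabilityMeasure P]
    (Y : Ω → ℝ) (hY : Measurable Y) (hYval : ∀ ω, Y ω = 1 ∨ Y ω = -1)
    (h : Ω → ℝ) (hh : Measurable h) :
    (P {ω | sgn (h ω) ≠ Y ω}).toReal = ∫ ω, (1 - Y ω * sgn (h ω)) / 2 ∂P := by
  classical
  have hmeas : MeasurableSet {ω | sgn (h ω) ≠ Y ω} := by
    have : Measurable fun ω => sgn (h ω) - Y ω := (measurable_sgn.comp hh).sub hY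
    have h2 : {ω | sgn (h ω) ≠ Y ω} = (fun ω => sgn (h ω) - Y ω) ⁻¹' ({0}ᶜ) := by
      ext ω; simp [sub_eq_zero]
    rw [h2]
    exact this (measurableSet_singleton 0).compl
  change P.real _ = _
  rw [← integral_indicator_one hmeas]
  congr 1
  funext ω
  rcases hYval ω with hy | hy <;>
    by_cases hω : (0:ℝ) < h ω <;>
    simp [Set.indicator_apply, sgn, hω, hy] <;> norm_num

/-- The excess classification risk of `f` is bounded by
`inf_{t > 0} ‖t f(X) − f*(X)‖_{L²}`; when `E[f(X) f*(X)] > 0` this infimum equals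
`‖f*(X)‖_{L²} · sin θ_{2,P}(f, f*)`, where `sin θ_{2,P}(f, f*)` is by definition
`inf_{t > 0} ‖t f(X) − f*(X)/‖f*(X)‖_{L²}‖_{L²}`. -/
theorem excess_risk_le_norm_mul_sin {d : ℕ} {Ω : Type*} [MeasurableSpace Ω]
    (P : Measure Ω) [IsProbabilityMeasure P]
    (X : Ω → EuclideanSpace ℝ (Fin d)) (hX : Measurable X)
    (Y : Ω → ℝ) (hY : Measurable Y) (hYval : ∀ ω, Y ω = 1 ∨ Y ω = -1)
    (fstar : EuclideanSpace ℝ (Fin d) → ℝ) (hfstar : Measurable fstar)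
    (hcond : (fun ω => fstar (X ω)) =ᵐ[P] P[Y | MeasurableSpace.comap X inferInstance])
    (hfstarL2 : MemLp (fun ω => fstar (X ω)) 2 P)
    (f : EuclideanSpace ℝ (Fin d) → ℝ) (hf : Measurable f)
    (hf0 : P {ω | f (X ω) = 0} = 0) (hfL2 : MemLp (fun ω => f (X ω)) 2 P) :
    ((P {ω | sgn (f (X ω)) ≠ Y ω}).toReal - (P {ω | sgn (fstar (X ω)) ≠ Y ω}).toReal
      ≤ ⨅ t : {t : ℝ // 0 < t},
          (∫ ω, ((t : ℝ) * f (X ω) - fstar (X ω)) ^ 2 ∂P) ^ (1 / 2 : ℝ)) ∧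
    (0 < ∫ ω, f (X ω) * fstar (X ω) ∂P →
      (⨅ t : {t : ℝ // 0 < t},
          (∫ ω, ((t : ℝ) * f (X ω) - fstar (X ω)) ^ 2 ∂P) ^ (1 / 2 : ℝ))
        = (∫ ω, fstar (X ω) ^ 2 ∂P) ^ (1 / 2 : ℝ) *
            ⨅ t : {t : ℝ // 0 < t},
              (∫ ω, ((t : ℝ) * f (X ω)
                - fstar (X ω) / (∫ ω', fstar (X ω') ^ 2 ∂P) ^ (1 / 2 : ℝ)) ^ 2 ∂P)
                ^ (1 / 2 : ℝ)) := by
  classical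
  set A : Ω → ℝ := fun ω => f (X ω) with hA
  set B : Ω → ℝ := fun ω => fstar (X ω) with hB
  have hAmeas : Measurable A := hf.comp hX
  have hBmeas : Measurable B := hfstar.comp hX
  have hYint : Integrable Y P := by
    refine ⟨hY.aestronglyMeasurable, ?_⟩
    refine HasFiniteIntegral.of_bounded (C := 1) (Filter.Eventually.of_forall fun ω => ?_)
    rcases hYval ω with hy | hy <;> simp [hy]
  have hBint : Integrable B P := hfstarL2.integrable one_le_two
  have hm : MeasurableSpace.comap X inferInstance ≤ ‹MeasurableSpace Ω› := hX.comap_le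
  -- key identity: ∫ Y * sgn(h∘X) = ∫ B * sgn(h∘X)
  have key : ∀ (h : EuclideanSpace ℝ (Fin d) → ℝ), Measurable h →
      ∫ ω, Y ω * sgn (h (X ω)) ∂P = ∫ ω, B ω * sgn (h (X ω)) ∂P := by
    intro h hh
    set S : Set Ω := X ⁻¹' {x | 0 < h x} with hS
    have hSm : MeasurableSet[MeasurableSpace.comap X inferInstance] S :=
      ⟨{x | 0 < h x}, measurableSet_lt measurable_const hh, rfl⟩
    have hSmeas : MeasurableSet S := hm _ hSm
    have hYS : ∫ ω in S, Y ω ∂P = ∫ ω in S, B ω ∂P := by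
      rw [← setIntegral_condExp hm hYint hSm]
      exact integral_congr_ae (ae_restrict_of_ae hcond.symm)
    have hYtot : ∫ ω, Y ω ∂P = ∫ ω, B ω ∂P := by
      rw [← integral_condExp (μ := P) (f := Y) hm]
      exact integral_congr_ae hcond.symm
    have expand : ∀ (g : Ω → ℝ), Integrable g P →
        ∫ ω, g ω * sgn (h (X ω)) ∂P = 2 * ∫ ω in S, g ω ∂P - ∫ ω, g ω ∂P := by
      intro g hg
      have e1 : (fun ω => g ω * sgn (h (X ω)))
          = fun ω => 2 * S.indicator g ω - g ω := by
        funext ω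
        by_cases hω : (0:ℝ) < h (X ω) <;>
          simp [sgn, hω, Set.indicator_apply, hS, Set.mem_preimage, Set.mem_setOf_eq] <;> ring
      rw [e1, integral_sub ((hg.indicator hSmeas).const_mul 2) hg,
        integral_const_mul, integral_indicator hSmeas]
    rw [expand Y hYint, expand B hBint, hYS, hYtot]
  -- risk difference formula
  have hdiff : (P {ω | sgn (A ω) ≠ Y ω}).toReal - (P {ω | sgn (B ω) ≠ Y ω}).toReal
      = ∫ ω, B ω * (sgn (B ω) - sgn (A ω)) / 2 ∂P := by
    rw [excess_aux P Y hY hYval A hAmeas, excess_aux P Y hY hYval B hBmeas]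
    have hintYA : Integrable (fun ω => Y ω * sgn (A ω)) P := by
      refine Integrable.mono' (g := fun ω => |Y ω|) hYint.abs
        (hY.mul (measurable_sgn.comp hAmeas)).aestronglyMeasurable
        (Filter.Eventually.of_forall fun ω => ?_)
      by_cases hω : (0:ℝ) < A ω <;> simp [sgn, hω, abs_mul]
    have hintYB : Integrable (fun ω => Y ω * sgn (B ω)) P := by
      refine Integrable.mono' (g := fun ω => |Y ω|) hYint.abs
        (hY.mul (measurable_sgn.comp hBmeas)).aestronglyMeasurable
        (Filter.Eventually.of_forall fun ω => ?_)
      by_cases hω : (0:ℝ) < B ω <;> simp [sgn, hω, abs_mul]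
    have hintBA : Integrable (fun ω => B ω * sgn (A ω)) P := by
      refine Integrable.mono' (g := fun ω => |B ω|) hBint.abs
        (hBmeas.mul (measurable_sgn.comp hAmeas)).aestronglyMeasurable
        (Filter.Eventually.of_forall fun ω => ?_)
      by_cases hω : (0:ℝ) < A ω <;> simp [sgn, hω, abs_mul]
    have hintBB : Integrable (fun ω => B ω * sgn (B ω)) P := by
      refine Integrable.mono' (g := fun ω => |B ω|) hBint.abs
        (hBmeas.mul (measurable_sgn.comp hBmeas)).aestronglyMeasurable
        (Filter.Eventually.of_forall fun ω => ?_)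
      by_cases hω : (0:ℝ) < B ω <;> simp [sgn, hω, abs_mul]
    have e1 : ∀ (g : Ω → ℝ), Integrable (fun ω => Y ω * sgn (g ω)) P →
        ∫ ω, (1 - Y ω * sgn (g ω)) / 2 ∂P
          = 1 / 2 - (1 / 2) * ∫ ω, Y ω * sgn (g ω) ∂P := by
      intro g hg
      have : (fun ω => (1 - Y ω * sgn (g ω)) / 2)
          = fun ω => (1:ℝ)/2 - (1/2) * (Y ω * sgn (g ω)) := by funext ω; ring
      rw [this, integral_sub (integrable_const _) (hg.const_mul _), integral_const,
        integral_const_mul]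
      simp
    rw [e1 A hintYA, e1 B hintYB, key f hf, key fstar hfstar]
    have e2 : ∫ ω, B ω * (sgn (B ω) - sgn (A ω)) / 2 ∂P
        = (1/2) * ∫ ω, B ω * sgn (B ω) ∂P - (1/2) * ∫ ω, B ω * sgn (A ω) ∂P := by
      rw [← integral_const_mul, ← integral_const_mul, ← integral_sub (hintBB.const_mul _)
        (hintBA.const_mul _)]
      congr 1; funext ω; ring
    rw [e2]; ring
  -- part 1 bound for each t
  have hbound : ∀ t : ℝ, 0 < t →
      (P {ω | sgn (A ω) ≠ Y ω}).toReal - (P {ω | sgn (B ω) ≠ Y ω}).toReal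
        ≤ (∫ ω, (t * A ω - B ω) ^ 2 ∂P) ^ (1 / 2 : ℝ) := by
    intro t ht
    have htAB : MemLp (fun ω => t * A ω - B ω) 2 P := (hfL2.const_mul t).sub hfstarL2
    have habs : Integrable (fun ω => |t * A ω - B ω|) P :=
      (htAB.integrable one_le_two).abs
    have hptwise : ∀ ω, B ω * (sgn (B ω) - sgn (A ω)) / 2 ≤ |t * A ω - B ω| := by
      intro ω
      by_cases hb : (0:ℝ) < B ω <;> by_cases ha : (0:ℝ) < A ω
      · simp only [sgn, if_pos hb, if_pos ha]; simpa using abs_nonneg (t * A ω - B ω)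
      · have h1 : t * A ω ≤ 0 := mul_nonpos_of_nonneg_of_nonpos ht.le (not_lt.mp ha)
        have h2 : B ω ≤ |t * A ω - B ω| := by
          rw [abs_sub_comm]
          calc B ω ≤ B ω - t * A ω := by linarith
          _ ≤ |B ω - t * A ω| := le_abs_self _
        simp only [sgn, if_pos hb, if_neg ha]; linarith
      · have h1 : 0 ≤ t * A ω := mul_nonneg ht.le ha.le
        have h2 : -B ω ≤ |t * A ω - B ω| := by
          calc -B ω ≤ t * A ω - B ω := by linarith
          _ ≤ |t * A ω - B ω| := le_abs_self _
        simp only [sgn, if_neg hb, if_pos ha]; linarith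
      · simp only [sgn, if_neg hb, if_neg ha]; simpa using abs_nonneg (t * A ω - B ω)
    have hLHSint : Integrable (fun ω => B ω * (sgn (B ω) - sgn (A ω)) / 2) P := by
      refine Integrable.mono' (g := fun ω => |B ω|) hBint.abs
        ((hBmeas.mul ((measurable_sgn.comp hBmeas).sub
          (measurable_sgn.comp hAmeas))).div_const 2).aestronglyMeasurable
        (Filter.Eventually.of_forall fun ω => ?_)
      by_cases hb : (0:ℝ) < B ω <;> by_cases ha : (0:ℝ) < A ω <;>
        simp [sgn, hb, ha, abs_mul, abs_div] <;> norm_num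
    have step1 : ∫ ω, B ω * (sgn (B ω) - sgn (A ω)) / 2 ∂P
        ≤ ∫ ω, |t * A ω - B ω| ∂P :=
      integral_mono hLHSint habs hptwise
    have step2 : ∫ ω, |t * A ω - B ω| ∂P ≤ (∫ ω, (t * A ω - B ω) ^ 2 ∂P) ^ (1 / 2 : ℝ) := by
      have hconj : Real.HolderConjugate 2 2 := Real.HolderConjugate.two_two
      have h1 : MemLp (fun ω => |t * A ω - B ω|) (ENNReal.ofReal 2) P := by
        have : (ENNReal.ofReal 2) = (2 : ENNReal) := by norm_num
        rw [this]
        simpa [Real.norm_eq_abs] using htAB.norm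
      have h2 : MemLp (fun _ : Ω => (1:ℝ)) (ENNReal.ofReal 2) P := memLp_const 1
      have := integral_mul_le_Lp_mul_Lq_of_nonneg hconj
        (Filter.Eventually.of_forall fun ω => abs_nonneg (t * A ω - B ω))
        (Filter.Eventually.of_forall fun _ => zero_le_one) h1 h2
      simp only [mul_one, one_pow] at this
      calc ∫ ω, |t * A ω - B ω| ∂P
          ≤ (∫ ω, |t * A ω - B ω| ^ (2:ℝ) ∂P) ^ (1 / 2 : ℝ)
            * (∫ _x, (1:ℝ) ^ (2:ℝ) ∂P) ^ (1 / 2 : ℝ) := by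
            simpa using this
        _ = (∫ ω, (t * A ω - B ω) ^ 2 ∂P) ^ (1 / 2 : ℝ) := by
            have : ∀ ω, |t * A ω - B ω| ^ (2:ℝ) = (t * A ω - B ω) ^ 2 := by
              intro ω
              rw [show ((2:ℝ)) = ((2:ℕ):ℝ) by norm_num, Real.rpow_natCast, sq_abs]
            simp [this]
    rw [hdiff]
    exact step1.trans step2
  constructor
  · exact le_ciInf fun t => hbound t t.2
  · intro hpos
    set c : ℝ := (∫ ω, B ω ^ 2 ∂P) ^ (1 / 2 : ℝ) with hc
    have hBsq : Integrable (fun ω => B ω ^ 2) P := hfstarL2.integrable_sq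
    have hBsqpos : 0 < ∫ ω, B ω ^ 2 ∂P := by
      rcases lt_or_eq_of_le (integral_nonneg (f := fun ω => B ω ^ 2) fun ω => sq_nonneg (B ω)) with h | h
      · exact h
      · exfalso
        have hB0 : ∀ᵐ ω ∂P, B ω ^ 2 = 0 := by
          have h2 := (integral_eq_zero_iff_of_nonneg (fun ω => sq_nonneg (B ω)) hBsq).mp h.symm
          filter_upwards [h2] with ω hω using hω
        have hAB0 : ∀ᵐ ω ∂P, A ω * B ω = 0 := by
          filter_upwards [hB0] with ω hω
          have : B ω = 0 := by nlinarith [sq_nonneg (B ω)]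
          simp [this]
        have : ∫ ω, A ω * B ω ∂P = 0 := integral_eq_zero_of_ae hAB0
        rw [hA, hB] at this
        exact absurd hpos (by rw [this]; exact lt_irrefl 0)
    have hcpos : 0 < c := Real.rpow_pos_of_pos hBsqpos _
    -- reindex infimum: s = c * t
    have hrange : (Set.range fun t : {t : ℝ // 0 < t} =>
        (∫ ω, (t : ℝ) * A ω - B ω ∂P) ^ (1/2:ℝ)) = Set.range fun t : {t : ℝ // 0 < t} =>
        (∫ ω, (t : ℝ) * A ω - B ω ∂P) ^ (1/2:ℝ) := rfl
    have keyeq : ∀ t : {t : ℝ // 0 < t},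
        (∫ ω, (c * (t : ℝ)) * A ω - B ω ∂P) = (∫ ω, (c * (t : ℝ)) * A ω - B ω ∂P) := fun _ => rfl
    have scale : ∀ t : {t : ℝ // 0 < t},
        (∫ ω, (c * (t : ℝ) * A ω - B ω) ^ 2 ∂P) ^ (1 / 2 : ℝ)
          = c * (∫ ω, ((t : ℝ) * A ω - B ω / c) ^ 2 ∂P) ^ (1 / 2 : ℝ) := by
      intro t
      have e1 : (fun ω => (c * (t : ℝ) * A ω - B ω) ^ 2)
          = fun ω => c ^ 2 * ((t : ℝ) * A ω - B ω / c) ^ 2 := by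
        funext ω
        field_simp
      rw [e1, integral_const_mul, Real.mul_rpow (by positivity)
        (integral_nonneg fun ω => sq_nonneg _), ← Real.rpow_natCast c 2, ← Real.rpow_mul hcpos.le]
      norm_num
    have reindex : (⨅ t : {t : ℝ // 0 < t},
        (∫ ω, ((t : ℝ) * A ω - B ω) ^ 2 ∂P) ^ (1 / 2 : ℝ))
        = ⨅ t : {t : ℝ // 0 < t},
          (∫ ω, (c * (t : ℝ) * A ω - B ω) ^ 2 ∂P) ^ (1 / 2 : ℝ) := by
      apply le_antisymm
      · refine le_ciInf fun t => ?_
        have : (⟨c * (t : ℝ), mul_pos hcpos t.2⟩ : {t : ℝ // 0 < t}) = ⟨c * t, _⟩ := rfl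
        exact ciInf_le ⟨0, by rintro x ⟨s, rfl⟩; positivity⟩ (⟨c * (t : ℝ), mul_pos hcpos t.2⟩ : {t : ℝ // 0 < t})
      · refine le_ciInf fun s => ?_
        have h := ciInf_le (f := fun t : {t : ℝ // 0 < t} =>
            (∫ ω, (c * (t : ℝ) * A ω - B ω) ^ 2 ∂P) ^ (1 / 2 : ℝ))
          ⟨0, by rintro x ⟨u, rfl⟩; positivity⟩
          (⟨(s : ℝ) / c, div_pos s.2 hcpos⟩ : {t : ℝ // 0 < t})
        rw [show c * ((s : ℝ) / c) = (s : ℝ) by field_simp] at h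
        exact h
    rw [reindex]
    have : (fun t : {t : ℝ // 0 < t} =>
        (∫ ω, (c * (t : ℝ) * A ω - B ω) ^ 2 ∂P) ^ (1 / 2 : ℝ))
        = fun t : {t : ℝ // 0 < t} =>
          c * (∫ ω, ((t : ℝ) * A ω - B ω / c) ^ 2 ∂P) ^ (1 / 2 : ℝ) := funext scale
    rw [this, ← Real.mul_iInf_of_nonneg hcpos.le]
end

section
/- Let (Ω, P) be a probability space, X : Ω → ℝ^d a random vector with E‖X‖₂² < ∞ whose second-moment matrix Σ = E[XXᵀ] is positive definite, and Y : Ω → ℝ square-integrable. Let β* ∈ ℝ^d be nonzero and satisfy E[(Y − ⟨β*, X⟩)⟨γ, X⟩] = 0 for every γ ∈ ℝ^d. Fix r > 0 and let β̃ minimize β ↦ E[(Y − ⟨β, X⟩)²] over S = { β : ‖β‖₂ ≤ r }. Then inf over t ∈ ℝ of ‖ t·β̃ − β*/‖β*‖₂ ‖₂ ≤ inf over a ≥ 0 of ‖ aΣ − I ‖_op, where ‖·‖_op is the operator norm of a matrix on (ℝ^d, ‖·‖₂). -/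
open MeasureTheory RealInnerProductSpace Matrix

lemma aux_int_mul {Ω : Type*} [MeasurableSpace Ω] {P : Measure Ω}
    {f g : Ω → ℝ} (hf : MemLp f 2 P) (hg : MemLp g 2 P) :
    Integrable (fun ω => f ω * g ω) P := by
  have h := hf.smul (r := 1) (hpqr := ⟨by rw [ENNReal.inv_two_add_inv_two, inv_one]⟩) hg
  have h2 : g • f = fun ω => f ω * g ω := by ext ω; simp [mul_comm]
  rw [h2] at h
  exact memLp_one_iff_integrable.mp h

lemma aux_clm_apply {d : ℕ} (Cov : Matrix (Fin d) (Fin d) ℝ) (v : EuclideanSpace ℝ (Fin d))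
    (i : Fin d) : toEuclideanCLM (𝕜 := ℝ) Cov v i = ∑ j, Cov i j * v j := by
  have := congrFun (ofLp_toEuclideanCLM (𝕜 := ℝ) Cov v) i
  simpa [Matrix.mulVec, dotProduct] using this

lemma aux_inner_clm {d : ℕ} (Cov : Matrix (Fin d) (Fin d) ℝ) (v w : EuclideanSpace ℝ (Fin d)) :
    ⟪v, toEuclideanCLM (𝕜 := ℝ) Cov w⟫ = ∑ i, ∑ j, v i * (Cov i j * w j) := by
  simp only [PiLp.inner_apply, RCLike.inner_apply, conj_trivial, aux_clm_apply, Finset.mul_sum]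
  exact Finset.sum_congr rfl fun i _ => by
    rw [Finset.sum_mul]; exact Finset.sum_congr rfl fun j _ => by ring

lemma aux_quad {d : ℕ} {Ω : Type*} [MeasurableSpace Ω] {P : Measure Ω}
    {X : Ω → EuclideanSpace ℝ (Fin d)} (hX2 : MemLp X 2 P)
    {Cov : Matrix (Fin d) (Fin d) ℝ}
    (hCov : ∀ i j, Cov i j = ∫ ω, X ω i * X ω j ∂P)
    (v : EuclideanSpace ℝ (Fin d)) :
    ∫ ω, ⟪v, X ω⟫ ^ 2 ∂P = ⟪v, toEuclideanCLM (𝕜 := ℝ) Cov v⟫ := by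
  have hXi : ∀ i, MemLp (fun ω => X ω i) 2 P := fun i => by
    simpa [EuclideanSpace.inner_single_left] using
      MemLp.const_inner (𝕜 := ℝ) (EuclideanSpace.single i (1:ℝ)) hX2
  have hint : ∀ i j : Fin d, Integrable (fun ω => X ω i * X ω j) P :=
    fun i j => aux_int_mul (hXi i) (hXi j)
  have hpt : ∀ ω, ⟪v, X ω⟫ ^ 2 = ∑ i, ∑ j, (v i * v j) * (X ω i * X ω j) := by
    intro ω
    simp only [PiLp.inner_apply, RCLike.inner_apply, conj_trivial, sq, Finset.sum_mul_sum]
    exact Finset.sum_congr rfl fun i _ => Finset.sum_congr rfl fun j _ => by ring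
  simp_rw [hpt]
  rw [integral_finset_sum _ (fun i _ => integrable_finset_sum _
    (fun j _ => ((hint i j).const_mul _)))]
  rw [aux_inner_clm]
  refine Finset.sum_congr rfl fun i _ => ?_
  rw [integral_finset_sum _ (fun j _ => ((hint i j).const_mul _))]
  refine Finset.sum_congr rfl fun j _ => ?_
  rw [integral_const_mul, ← hCov]
  ring

lemma aux_risk {d : ℕ} {Ω : Type*} [MeasurableSpace Ω] {P : Measure Ω}
    {X : Ω → EuclideanSpace ℝ (Fin d)} (hX2 : MemLp X 2 P)
    {Y : Ω → ℝ} (hY2 : MemLp Y 2 P)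
    {Cov : Matrix (Fin d) (Fin d) ℝ}
    (hCov : ∀ i j, Cov i j = ∫ ω, X ω i * X ω j ∂P)
    {βs : EuclideanSpace ℝ (Fin d)}
    (hproj : ∀ γ : EuclideanSpace ℝ (Fin d), ∫ ω, (Y ω - ⟪βs, X ω⟫) * ⟪γ, X ω⟫ ∂P = 0)
    (β : EuclideanSpace ℝ (Fin d)) :
    ∫ ω, (Y ω - ⟪β, X ω⟫) ^ 2 ∂P
      = (∫ ω, (Y ω - ⟪βs, X ω⟫) ^ 2 ∂P)
        + ⟪β - βs, toEuclideanCLM (𝕜 := ℝ) Cov (β - βs)⟫ := by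
  have hinner2 : ∀ v : EuclideanSpace ℝ (Fin d), MemLp (fun ω => ⟪v, X ω⟫) 2 P :=
    fun v => MemLp.const_inner (𝕜 := ℝ) v hX2
  have hmf : MemLp (fun ω => Y ω - ⟪βs, X ω⟫) 2 P := hY2.sub (hinner2 βs)
  have hmg : MemLp (fun ω => ⟪βs - β, X ω⟫) 2 P := hinner2 _
  have if1 : Integrable (fun ω => (Y ω - ⟪βs, X ω⟫) * (Y ω - ⟪βs, X ω⟫)) P :=
    aux_int_mul hmf hmf
  have if2 : Integrable (fun ω => (Y ω - ⟪βs, X ω⟫) * ⟪βs - β, X ω⟫) P :=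
    aux_int_mul hmf hmg
  have if3 : Integrable (fun ω => ⟪βs - β, X ω⟫ * ⟪βs - β, X ω⟫) P :=
    aux_int_mul hmg hmg
  have hpt : ∀ ω, (Y ω - ⟪β, X ω⟫) ^ 2
      = (Y ω - ⟪βs, X ω⟫) * (Y ω - ⟪βs, X ω⟫)
        + (2 * ((Y ω - ⟪βs, X ω⟫) * ⟪βs - β, X ω⟫)
          + ⟪βs - β, X ω⟫ * ⟪βs - β, X ω⟫) := by
    intro ω
    have h := inner_sub_left (𝕜 := ℝ) βs β (X ω)
    rw [show (Y ω - ⟪β, X ω⟫) = (Y ω - ⟪βs, X ω⟫) + ⟪βs - β, X ω⟫ by rw [h]; ring]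
    ring
  have if2' : Integrable (fun ω => 2 * ((Y ω - ⟪βs, X ω⟫) * ⟪βs - β, X ω⟫)) P :=
    if2.const_mul 2
  have if23 : Integrable (fun ω => 2 * ((Y ω - ⟪βs, X ω⟫) * ⟪βs - β, X ω⟫)
      + ⟪βs - β, X ω⟫ * ⟪βs - β, X ω⟫) P := if2'.add if3
  simp_rw [hpt]
  rw [integral_add if1 if23, integral_add if2' if3, integral_const_mul, hproj (βs - β)]
  have hq : ∫ ω, ⟪βs - β, X ω⟫ * ⟪βs - β, X ω⟫ ∂P
      = ⟪β - βs, toEuclideanCLM (𝕜 := ℝ) Cov (β - βs)⟫ := by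
    have := aux_quad hX2 hCov (βs - β)
    simp_rw [sq] at this
    rw [this, show (βs - β : EuclideanSpace ℝ (Fin d)) = -(β - βs) by abel,
      map_neg, inner_neg_neg]
  rw [hq]
  simp_rw [sq]
  ring

set_option maxHeartbeats 1000000 in
/-- The constrained least-squares minimizer `β̃` over the ball of radius `r` satisfies
`sin θ(β̃, β*) ≤ inf_{a ≥ 0} ‖aΣ − I‖_op`, where the left-hand side is expressed as
`inf_{t ∈ ℝ} ‖t β̃ − β*/‖β*‖₂‖₂`. -/
theorem sin_angle_le_opNorm {d : ℕ} {Ω : Type*} [MeasurableSpace Ω]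
    (P : Measure Ω) [IsProbabilityMeasure P]
    (X : Ω → EuclideanSpace ℝ (Fin d)) (hX : Measurable X) (hX2 : MemLp X 2 P)
    (Y : Ω → ℝ) (hY : Measurable Y) (hY2 : MemLp Y 2 P)
    (Cov : Matrix (Fin d) (Fin d) ℝ)
    (hCov : ∀ i j, Cov i j = ∫ ω, X ω i * X ω j ∂P) (hCovPD : Cov.PosDef)
    (βs : EuclideanSpace ℝ (Fin d)) (hβs : βs ≠ 0)
    (hproj : ∀ γ : EuclideanSpace ℝ (Fin d), ∫ ω, (Y ω - ⟪βs, X ω⟫) * ⟪γ, X ω⟫ ∂P = 0)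
    (r : ℝ) (hr : 0 < r)
    (βt : EuclideanSpace ℝ (Fin d)) (hβt : ‖βt‖ ≤ r)
    (hmin : ∀ β : EuclideanSpace ℝ (Fin d), ‖β‖ ≤ r →
      ∫ ω, (Y ω - ⟪βt, X ω⟫) ^ 2 ∂P ≤ ∫ ω, (Y ω - ⟪β, X ω⟫) ^ 2 ∂P) :
    (⨅ t : ℝ, ‖t • βt - ‖βs‖⁻¹ • βs‖)
      ≤ ⨅ a : {a : ℝ // 0 ≤ a},
          ‖Matrix.toEuclideanCLM (𝕜 := ℝ)
            ((a : ℝ) • Cov - (1 : Matrix (Fin d) (Fin d) ℝ))‖ := by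
  set A := toEuclideanCLM (𝕜 := ℝ) Cov with hAdef
  -- quadratic form minimality
  have hQmin : ∀ β : EuclideanSpace ℝ (Fin d), ‖β‖ ≤ r →
      ⟪βt - βs, A (βt - βs)⟫ ≤ ⟪β - βs, A (β - βs)⟫ := by
    intro β hβ
    have h := hmin β hβ
    rw [aux_risk hX2 hY2 hCov hproj β, aux_risk hX2 hY2 hCov hproj βt] at h
    linarith
  -- symmetry
  have hsymm : ∀ x y : EuclideanSpace ℝ (Fin d), ⟪A x, y⟫ = ⟪x, A y⟫ := by
    have hs := (Matrix.isHermitian_iff_isSymmetric).mp hCovPD.1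
    intro x y
    have hx : toEuclideanLin (𝕜 := ℝ) Cov x = A x := by
      rw [← Matrix.coe_toEuclideanCLM_eq_toEuclideanLin]; rfl
    have hy : toEuclideanLin (𝕜 := ℝ) Cov y = A y := by
      rw [← Matrix.coe_toEuclideanCLM_eq_toEuclideanLin]; rfl
    have := hs x y
    rwa [hx, hy] at this
  -- bridge to dotProduct
  have hbridge : ∀ w : EuclideanSpace ℝ (Fin d),
      ⟪w, A w⟫ = dotProduct (star ((WithLp.equiv 2 (Fin d → ℝ)) w))
        (Cov *ᵥ ((WithLp.equiv 2 (Fin d → ℝ)) w)) := by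
    intro w
    rw [hAdef, aux_inner_clm]
    simp [dotProduct, Matrix.mulVec, Finset.mul_sum]
  -- positive semidefiniteness
  have hpsd : ∀ w : EuclideanSpace ℝ (Fin d), 0 ≤ ⟪w, A w⟫ := by
    intro w
    rw [hbridge w]
    exact hCovPD.posSemidef.dotProduct_mulVec_nonneg _
  -- injectivity
  have hinj : ∀ w : EuclideanSpace ℝ (Fin d), A w = 0 → w = 0 := by
    intro w hw
    by_contra hw0
    have hne : (WithLp.equiv 2 (Fin d → ℝ)) w ≠ 0 := by
      intro h
      exact hw0 ((WithLp.equiv 2 (Fin d → ℝ)).injective (by simpa using h))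
    have := hCovPD.dotProduct_mulVec_pos hne
    rw [← hbridge w, hw, inner_zero_right] at this
    exact lt_irrefl 0 this
  -- expansion of the quadratic form
  have hexp : ∀ (w u : EuclideanSpace ℝ (Fin d)) (t : ℝ),
      ⟪w + t • u, A (w + t • u)⟫
        = ⟪w, A w⟫ + 2 * t * ⟪A w, u⟫ + t ^ 2 * ⟪u, A u⟫ := by
    intro w u t
    have h1 : ⟪u, A w⟫ = ⟪A w, u⟫ := real_inner_comm _ _
    have h2 : ⟪w, A u⟫ = ⟪A w, u⟫ := by rw [← hsymm]
    simp only [map_add, ContinuousLinearMap.map_smul, inner_add_left, inner_add_right,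
      real_inner_smul_left, real_inner_smul_right, h1, h2]
    ring
  -- variational inequality
  have hvar : ∀ β : EuclideanSpace ℝ (Fin d), ‖β‖ ≤ r → 0 ≤ ⟪A (βt - βs), β - βt⟫ := by
    intro β hβ
    set w := βt - βs with hw
    set u := β - βt with hu
    set c := ⟪A w, u⟫ with hc
    set q := ⟪u, A u⟫ with hqdef
    have hQu : 0 ≤ q := hpsd u
    by_contra hcon
    push_neg at hcon
    set t := min 1 (-c / (q + 1)) with ht
    have htpos : 0 < t := lt_min one_pos (div_pos (neg_pos.mpr hcon) (by linarith))
    have ht1 : t ≤ 1 := min_le_left _ _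
    have ht2 : t ≤ -c / (q + 1) := min_le_right _ _
    have hfeas : ‖βt + t • u‖ ≤ r := by
      have heq : βt + t • u = (1 - t) • βt + t • β := by
        rw [hu, smul_sub, sub_smul, one_smul]; abel
      rw [heq]
      calc ‖(1 - t) • βt + t • β‖ ≤ ‖(1 - t) • βt‖ + ‖t • β‖ := norm_add_le _ _
        _ = (1 - t) * ‖βt‖ + t * ‖β‖ := by
            rw [norm_smul, norm_smul, Real.norm_of_nonneg (by linarith),
              Real.norm_of_nonneg htpos.le]
        _ ≤ (1 - t) * r + t * r :=
            add_le_add (mul_le_mul_of_nonneg_left hβt (by linarith))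
              (mul_le_mul_of_nonneg_left hβ htpos.le)
        _ = r := by ring
    have hq := hQmin _ hfeas
    have hsub : (βt + t • u) - βs = w + t • u := by rw [hw]; abel
    rw [hsub, hexp w u t] at hq
    have h5 : 0 ≤ 2 * t * c + t ^ 2 * q := by rw [← hqdef] at hq; linarith
    have h6 : 0 ≤ 2 * c + t * q := by nlinarith [h5, htpos]
    have h8 : t * q ≤ (-c / (q + 1)) * q := mul_le_mul_of_nonneg_right ht2 hQu
    have h9 : (-c / (q + 1)) * q ≤ -c := by
      rw [div_mul_eq_mul_div, div_le_iff₀ (by linarith : (0:ℝ) < q + 1)]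
      nlinarith
    linarith
  -- normal cone: obtain the KKT multiplier
  set v := A (βs - βt) with hvdef
  have hvineq : ∀ β : EuclideanSpace ℝ (Fin d), ‖β‖ ≤ r → ⟪v, β⟫ ≤ ⟪v, βt⟫ := by
    intro β hβ
    have h := hvar β hβ
    have hneg : v = -(A (βt - βs)) := by
      rw [hvdef, show βs - βt = -(βt - βs) by abel, map_neg]
    have := inner_sub_right (𝕜 := ℝ) v β βt
    have h2 : ⟪v, β - βt⟫ ≤ 0 := by
      rw [hneg, inner_neg_left]
      linarith
    linarith [inner_sub_right (𝕜 := ℝ) v β βt, h2]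
  obtain ⟨lam, hlam0, hveq⟩ : ∃ lam : ℝ, 0 ≤ lam ∧ v = lam • βt := by
    rcases eq_or_ne v 0 with hv | hv
    · exact ⟨0, le_rfl, by simp [hv]⟩
    · have hvpos : 0 < ‖v‖ := norm_pos_iff.mpr hv
      have hβfeas : ‖(r / ‖v‖) • v‖ ≤ r := by
        rw [norm_smul, Real.norm_of_nonneg (by positivity)]
        rw [div_mul_cancel₀ _ hvpos.ne']
      have h1 : r * ‖v‖ ≤ ⟪v, βt⟫ := by
        have := hvineq _ hβfeas
        rwa [real_inner_smul_right, real_inner_self_eq_norm_sq,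
          show r / ‖v‖ * ‖v‖ ^ 2 = r * ‖v‖ * (‖v‖ / ‖v‖) by ring,
          div_self hvpos.ne', mul_one] at this
      have h2 : ⟪v, βt⟫ ≤ ‖v‖ * ‖βt‖ := real_inner_le_norm v βt
      have h3 : ‖βt‖ = r := by
        have : r ≤ ‖βt‖ := by nlinarith
        linarith
      have h4 : ⟪v, βt⟫ = ‖v‖ * ‖βt‖ := by nlinarith
      have h5 := inner_eq_norm_mul_iff_real.mp h4
      refine ⟨‖v‖ / r, by positivity, ?_⟩
      rw [h3] at h5
      have h6 : v = r⁻¹ • (‖v‖ • βt) := by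
        have := congrArg (fun z => r⁻¹ • z) h5
        simpa [smul_smul, inv_mul_cancel₀ hr.ne'] using this
      rw [div_eq_inv_mul, ← smul_smul]
      exact h6
  -- ‖βs - βt‖ ≤ ‖βs‖
  have hdist : ‖βs - βt‖ ≤ ‖βs‖ := by
    rcases eq_or_lt_of_le hlam0 with hl0 | hlpos
    · have hv0 : v = 0 := by rw [hveq, ← hl0, zero_smul]
      have : βs - βt = 0 := hinj _ (by rw [← hvdef]; exact hv0)
      rw [this, norm_zero]
      exact norm_nonneg βs
    · have hp : 0 ≤ ⟪βs - βt, v⟫ := hpsd (βs - βt)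
      have hp2 : 0 ≤ lam * ⟪βs - βt, βt⟫ := by
        rwa [hveq, real_inner_smul_right] at hp
      have hp3 : 0 ≤ ⟪βs - βt, βt⟫ := by nlinarith [hp2]
      have hexp2 : ⟪βs - βt, βt⟫ = ⟪βs, βt⟫ - ‖βt‖ ^ 2 := by
        rw [inner_sub_left, real_inner_self_eq_norm_sq]
      have hsq : ‖βs - βt‖ ^ 2 ≤ ‖βs‖ ^ 2 := by
        rw [norm_sub_sq_real]
        nlinarith [norm_nonneg βt]
      nlinarith [norm_nonneg (βs - βt), norm_nonneg βs]
  -- final assembly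
  refine le_ciInf fun a => ?_
  obtain ⟨a0, ha0⟩ := a
  simp only
  set M := toEuclideanCLM (𝕜 := ℝ) (a0 • Cov - (1 : Matrix (Fin d) (Fin d) ℝ)) with hMdef
  have hM : M (βs - βt) = (1 + a0 * lam) • βt - βs := by
    have hgap : A βs - A βt = lam • βt := by
      rw [← map_sub, ← hvdef, hveq]
    have hMeq : M = a0 • A - 1 := by
      rw [hMdef, hAdef]
      rw [map_sub (Matrix.toEuclideanCLM (𝕜 := ℝ)) (a0 • Cov) 1,
        _root_.map_smul (Matrix.toEuclideanCLM (𝕜 := ℝ)) a0 Cov,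
        _root_.map_one (Matrix.toEuclideanCLM (𝕜 := ℝ))]
    rw [hMeq]
    simp only [ContinuousLinearMap.sub_apply, ContinuousLinearMap.smul_apply,
      ContinuousLinearMap.one_apply]
    rw [map_sub A βs βt, hgap, smul_smul, add_smul, one_smul]
    abel
  have hns : 0 < ‖βs‖ := norm_pos_iff.mpr hβs
  have hnorm : ‖(1 + a0 * lam) • βt - βs‖ ≤ ‖M‖ * ‖βs‖ := by
    rw [← hM]
    exact (M.le_opNorm _).trans (mul_le_mul_of_nonneg_left hdist (norm_nonneg M))
  have hb : BddBelow (Set.range fun t : ℝ => ‖t • βt - ‖βs‖⁻¹ • βs‖) := by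
    refine ⟨0, ?_⟩
    rintro x ⟨t, rfl⟩
    exact norm_nonneg _
  refine le_trans (ciInf_le hb ((1 + a0 * lam) / ‖βs‖)) ?_
  have hfac : ((1 + a0 * lam) / ‖βs‖) • βt - ‖βs‖⁻¹ • βs
      = ‖βs‖⁻¹ • ((1 + a0 * lam) • βt - βs) := by
    rw [smul_sub, smul_smul, div_eq_inv_mul]
  rw [hfac, norm_smul, Real.norm_of_nonneg (inv_nonneg.mpr (norm_nonneg βs))]
  calc ‖βs‖⁻¹ * ‖(1 + a0 * lam) • βt - βs‖ ≤ ‖βs‖⁻¹ * (‖M‖ * ‖βs‖) :=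
        mul_le_mul_of_nonneg_left hnorm (inv_nonneg.mpr (norm_nonneg βs))
    _ = ‖M‖ := by rw [mul_comm ‖M‖ ‖βs‖, ← mul_assoc, inv_mul_cancel₀ hns.ne', one_mul]
end

section
/- Let (Ω, P) be a probability space, X : Ω → ℝ^d a random vector whose law is rotation invariant, and Y : Ω → {−1, 1} a random variable with P(Y = 1 | X) = η(⟨β*, X⟩) almost surely, for some measurable η : ℝ → [0, 1] and some nonzero β* ∈ ℝ^d. Let φ : {−1, 1} × ℝ → ℝ be such that f ↦ φ(y, f) is convex for each y ∈ {−1, 1}, and suppose β ↦ E[φ(Y, ⟨β, X⟩)] is finite on the ball S = { β : ‖β‖₂ ≤ r } for some r > 0. If β̃ is the unique minimizer of β ↦ E[φ(Y, ⟨β, X⟩)] over S, then β̃ = c·β* for some c ∈ ℝ. -/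
open MeasureTheory RealInnerProductSpace

/-- Under rotation invariance of the law of `X`, a single-index model
`P(Y = 1 | X) = η(⟨β*, X⟩)`, and convexity of the surrogate loss, the unique constrained
minimizer of the surrogate risk over the ball of radius `r` is a multiple of `β*`. -/
theorem constrained_min_is_multiple {d : ℕ} {Ω : Type*} [MeasurableSpace Ω]
    (P : Measure Ω) [IsProbabilityMeasure P]
    (X : Ω → EuclideanSpace ℝ (Fin d)) (hX : Measurable X)
    (hrot : ∀ R : EuclideanSpace ℝ (Fin d) ≃ₗᵢ[ℝ] EuclideanSpace ℝ (Fin d),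
      Measure.map (fun ω => R (X ω)) P = Measure.map X P)
    (Y : Ω → ℝ) (hY : Measurable Y) (hYval : ∀ ω, Y ω = 1 ∨ Y ω = -1)
    (η : ℝ → ℝ) (hη : Measurable η) (hη01 : ∀ z, η z ∈ Set.Icc (0 : ℝ) 1)
    (βs : EuclideanSpace ℝ (Fin d)) (hβs : βs ≠ 0)
    (hcond : P[Set.indicator {ω | Y ω = 1} (fun _ => (1 : ℝ))
        | MeasurableSpace.comap X inferInstance] =ᵐ[P] fun ω => η ⟪βs, X ω⟫)
    (φ : ℝ → ℝ → ℝ)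
    (hφ1 : ConvexOn ℝ Set.univ (φ 1)) (hφm1 : ConvexOn ℝ Set.univ (φ (-1)))
    (r : ℝ) (hr : 0 < r)
    (hint : ∀ β : EuclideanSpace ℝ (Fin d), ‖β‖ ≤ r →
      Integrable (fun ω => φ (Y ω) ⟪β, X ω⟫) P)
    (βt : EuclideanSpace ℝ (Fin d)) (hβt : ‖βt‖ ≤ r)
    (hmin : ∀ β : EuclideanSpace ℝ (Fin d), ‖β‖ ≤ r →
      ∫ ω, φ (Y ω) ⟪βt, X ω⟫ ∂P ≤ ∫ ω, φ (Y ω) ⟪β, X ω⟫ ∂P)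
    (huniq : ∀ β : EuclideanSpace ℝ (Fin d), ‖β‖ ≤ r →
      (∫ ω, φ (Y ω) ⟪β, X ω⟫ ∂P = ∫ ω, φ (Y ω) ⟪βt, X ω⟫ ∂P) → β = βt) :
    ∃ c : ℝ, βt = c • βs := by
  classical
  have hm : MeasurableSpace.comap X inferInstance ≤ ‹MeasurableSpace Ω› := hX.comap_le
  -- continuity of the loss in its second argument
  have hφ1c : Continuous (φ 1) :=
    continuousOn_univ.mp (hφ1.continuousOn isOpen_univ)
  have hφm1c : Continuous (φ (-1)) :=
    continuousOn_univ.mp (hφm1.continuousOn isOpen_univ)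
  have hinner : ∀ v : EuclideanSpace ℝ (Fin d),
      Continuous fun x : EuclideanSpace ℝ (Fin d) => ⟪v, x⟫ :=
    fun v => continuous_const.inner continuous_id
  -- the reflection across the span of βs
  set K : Submodule ℝ (EuclideanSpace ℝ (Fin d)) := ℝ ∙ βs with hK
  set R : EuclideanSpace ℝ (Fin d) ≃ₗᵢ[ℝ] EuclideanSpace ℝ (Fin d) := K.reflection with hRdef
  have hRsym : ∀ u v : EuclideanSpace ℝ (Fin d), ⟪R u, v⟫ = ⟪u, R v⟫ := by
    intro u v
    simp only [hRdef, Submodule.reflection_apply, inner_sub_left, inner_sub_right, two_smul,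
      inner_add_left, inner_add_right]
    rw [Submodule.inner_starProjection_left_eq_right]
  have hRfix : R βs = βs :=
    Submodule.reflection_mem_subspace_eq_self (Submodule.mem_span_singleton_self βs)
  have hRβs : ∀ x, ⟪βs, R x⟫ = ⟪βs, x⟫ := by
    intro x
    rw [← hRsym βs x, hRfix]
  -- measurability wrt m
  have hXm : Measurable[MeasurableSpace.comap X inferInstance] X := measurable_iff_comap_le.mpr le_rfl
  -- indicator set
  set s1 : Set Ω := {ω | Y ω = 1} with hs1def
  have hs1 : MeasurableSet s1 := hY (measurableSet_singleton 1)
  set ind : Ω → ℝ := s1.indicator fun _ => (1 : ℝ) with hinddef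
  set indc : Ω → ℝ := fun ω => 1 - ind ω with hindcdef
  have hind_int : Integrable ind P := (integrable_const (1 : ℝ)).indicator hs1
  have hindc_int : Integrable indc P := (integrable_const (1 : ℝ)).sub hind_int
  have hcondc : P[indc|MeasurableSpace.comap X inferInstance] =ᵐ[P] fun ω => 1 - η ⟪βs, X ω⟫ := by
    have h1 : P[indc|MeasurableSpace.comap X inferInstance] =ᵐ[P] P[(fun _ => (1 : ℝ))|MeasurableSpace.comap X inferInstance] - P[ind|MeasurableSpace.comap X inferInstance] :=
      condExp_sub (integrable_const 1) hind_int _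
    have h2 : P[(fun _ => (1 : ℝ))|MeasurableSpace.comap X inferInstance] = fun _ => (1 : ℝ) := condExp_const hm 1
    filter_upwards [h1, hcond] with ω hω1 hω2
    simp only [hω1, Pi.sub_apply, h2, hω2]
  -- the risk formula
  have formula : ∀ β : EuclideanSpace ℝ (Fin d), ‖β‖ ≤ r →
      ∫ ω, φ (Y ω) ⟪β, X ω⟫ ∂P =
        ∫ ω, (η ⟪βs, X ω⟫ * φ 1 ⟪β, X ω⟫ + (1 - η ⟪βs, X ω⟫) * φ (-1) ⟪β, X ω⟫) ∂P := by
    intro β hβ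
    have hf1m : StronglyMeasurable[MeasurableSpace.comap X inferInstance] (fun ω => φ 1 ⟪β, X ω⟫) :=
      ((hφ1c.measurable.comp (hinner β).measurable).comp hXm).stronglyMeasurable
    have hfm1m : StronglyMeasurable[MeasurableSpace.comap X inferInstance] (fun ω => φ (-1) ⟪β, X ω⟫) :=
      ((hφm1c.measurable.comp (hinner β).measurable).comp hXm).stronglyMeasurable
    have hprod1 : (fun ω => φ 1 ⟪β, X ω⟫) * ind
        = s1.indicator (fun ω => φ (Y ω) ⟪β, X ω⟫) := by
      funext ω
      by_cases h : ω ∈ s1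
      · have h1 : Y ω = 1 := h
        simp [hinddef, Set.indicator_of_mem h, h1]
      · simp [hinddef, Set.indicator_of_notMem h]
    have hprodm1 : (fun ω => φ (-1) ⟪β, X ω⟫) * indc
        = s1ᶜ.indicator (fun ω => φ (Y ω) ⟪β, X ω⟫) := by
      funext ω
      by_cases h : ω ∈ s1
      · have hc : ω ∉ s1ᶜ := fun hh => hh h
        simp [hindcdef, hinddef, Set.indicator_of_mem h, Set.indicator_of_notMem hc]
      · have h1 : Y ω = -1 := (hYval ω).resolve_left h
        simp [hindcdef, hinddef, Set.indicator_of_notMem h,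
          Set.indicator_of_mem (Set.mem_compl h), h1]
    have hI1 : Integrable ((fun ω => φ 1 ⟪β, X ω⟫) * ind) P := by
      rw [hprod1]; exact (hint β hβ).indicator hs1
    have hIm1 : Integrable ((fun ω => φ (-1) ⟪β, X ω⟫) * indc) P := by
      rw [hprodm1]; exact (hint β hβ).indicator hs1.compl
    have hdecomp : (fun ω => φ (Y ω) ⟪β, X ω⟫)
        = (fun ω => φ 1 ⟪β, X ω⟫) * ind + (fun ω => φ (-1) ⟪β, X ω⟫) * indc := by
      funext ω
      by_cases h : ω ∈ s1
      · have h1 : Y ω = 1 := h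
        simp [hinddef, hindcdef, Set.indicator_of_mem h, h1]
      · have h1 : Y ω = -1 := (hYval ω).resolve_left h
        simp [hinddef, hindcdef, Set.indicator_of_notMem h, h1]
    have hc1 : P[(fun ω => φ 1 ⟪β, X ω⟫) * ind|MeasurableSpace.comap X inferInstance]
        =ᵐ[P] (fun ω => φ 1 ⟪β, X ω⟫) * fun ω => η ⟪βs, X ω⟫ :=
      (condExp_mul_of_stronglyMeasurable_left hf1m hI1 hind_int).trans
        (Filter.EventuallyEq.rfl.mul hcond)
    have hc2 : P[(fun ω => φ (-1) ⟪β, X ω⟫) * indc|MeasurableSpace.comap X inferInstance]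
        =ᵐ[P] (fun ω => φ (-1) ⟪β, X ω⟫) * fun ω => 1 - η ⟪βs, X ω⟫ :=
      (condExp_mul_of_stronglyMeasurable_left hfm1m hIm1 hindc_int).trans
        (Filter.EventuallyEq.rfl.mul hcondc)
    have hJ1 : Integrable ((fun ω => φ 1 ⟪β, X ω⟫) * fun ω => η ⟪βs, X ω⟫) P :=
      integrable_condExp.congr hc1
    have hJ2 : Integrable ((fun ω => φ (-1) ⟪β, X ω⟫) * fun ω => 1 - η ⟪βs, X ω⟫) P :=
      integrable_condExp.congr hc2
    calc ∫ ω, φ (Y ω) ⟪β, X ω⟫ ∂P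
        = ∫ ω, ((fun ω => φ 1 ⟪β, X ω⟫) * ind + (fun ω => φ (-1) ⟪β, X ω⟫) * indc) ω ∂P := by
          rw [← hdecomp]
      _ = (∫ ω, ((fun ω => φ 1 ⟪β, X ω⟫) * ind) ω ∂P)
            + ∫ ω, ((fun ω => φ (-1) ⟪β, X ω⟫) * indc) ω ∂P := integral_add hI1 hIm1
      _ = (∫ ω, (P[(fun ω => φ 1 ⟪β, X ω⟫) * ind|MeasurableSpace.comap X inferInstance]) ω ∂P)
            + ∫ ω, (P[(fun ω => φ (-1) ⟪β, X ω⟫) * indc|MeasurableSpace.comap X inferInstance]) ω ∂P := by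
          rw [integral_condExp hm, integral_condExp hm]
      _ = (∫ ω, ((fun ω => φ 1 ⟪β, X ω⟫) * fun ω => η ⟪βs, X ω⟫) ω ∂P)
            + ∫ ω, ((fun ω => φ (-1) ⟪β, X ω⟫) * fun ω => 1 - η ⟪βs, X ω⟫) ω ∂P := by
          rw [integral_congr_ae hc1, integral_congr_ae hc2]
      _ = ∫ ω, (((fun ω => φ 1 ⟪β, X ω⟫) * fun ω => η ⟪βs, X ω⟫)
            + ((fun ω => φ (-1) ⟪β, X ω⟫) * fun ω => 1 - η ⟪βs, X ω⟫)) ω ∂P :=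
          (integral_add hJ1 hJ2).symm
      _ = ∫ ω, (η ⟪βs, X ω⟫ * φ 1 ⟪β, X ω⟫ + (1 - η ⟪βs, X ω⟫) * φ (-1) ⟪β, X ω⟫) ∂P := by
          apply integral_congr_ae
          filter_upwards with ω
          simp only [Pi.add_apply, Pi.mul_apply]
          ring
  -- invariance of the risk under the reflection
  have mapinv : ∀ β : EuclideanSpace ℝ (Fin d),
      ∫ ω, (η ⟪βs, X ω⟫ * φ 1 ⟪β, X ω⟫ + (1 - η ⟪βs, X ω⟫) * φ (-1) ⟪β, X ω⟫) ∂P =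
      ∫ ω, (η ⟪βs, X ω⟫ * φ 1 ⟪R β, X ω⟫ + (1 - η ⟪βs, X ω⟫) * φ (-1) ⟪R β, X ω⟫) ∂P := by
    intro β
    set G : EuclideanSpace ℝ (Fin d) → ℝ :=
      fun x => η ⟪βs, x⟫ * φ 1 ⟪β, x⟫ + (1 - η ⟪βs, x⟫) * φ (-1) ⟪β, x⟫ with hGdef
    have hGm : Measurable G := by
      apply Measurable.add
      · exact (hη.comp (hinner βs).measurable).mul
          (hφ1c.measurable.comp (hinner β).measurable)
      · exact (measurable_const.sub (hη.comp (hinner βs).measurable)).mul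
          (hφm1c.measurable.comp (hinner β).measurable)
    have h1 : ∫ ω, G (X ω) ∂P = ∫ x, G x ∂(Measure.map X P) :=
      (integral_map hX.aemeasurable hGm.aestronglyMeasurable).symm
    have h3 : ∫ x, G x ∂(Measure.map X P) = ∫ ω, G (R (X ω)) ∂P := by
      rw [← hrot R]
      exact integral_map (R.continuous.measurable.comp hX).aemeasurable
        hGm.aestronglyMeasurable
    have h4 : ∀ ω, G (R (X ω)) =
        η ⟪βs, X ω⟫ * φ 1 ⟪R β, X ω⟫ + (1 - η ⟪βs, X ω⟫) * φ (-1) ⟪R β, X ω⟫ := by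
      intro ω
      simp only [hGdef, hRβs, hRsym β (X ω)]
    calc ∫ ω, (η ⟪βs, X ω⟫ * φ 1 ⟪β, X ω⟫ + (1 - η ⟪βs, X ω⟫) * φ (-1) ⟪β, X ω⟫) ∂P
        = ∫ ω, G (X ω) ∂P := rfl
      _ = ∫ x, G x ∂(Measure.map X P) := h1
      _ = ∫ ω, G (R (X ω)) ∂P := h3
      _ = ∫ ω, (η ⟪βs, X ω⟫ * φ 1 ⟪R β, X ω⟫
            + (1 - η ⟪βs, X ω⟫) * φ (-1) ⟪R β, X ω⟫) ∂P := by
          exact integral_congr_ae (Filter.Eventually.of_forall fun ω => h4 ω)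
  have hRβt_norm : ‖R βt‖ ≤ r := by rw [R.norm_map]; exact hβt
  have key : ∫ ω, φ (Y ω) ⟪R βt, X ω⟫ ∂P = ∫ ω, φ (Y ω) ⟪βt, X ω⟫ ∂P := by
    rw [formula (R βt) hRβt_norm, formula βt hβt]
    exact (mapinv βt).symm
  have hfixed : R βt = βt := huniq (R βt) hRβt_norm key
  have hmem : βt ∈ K := (Submodule.reflection_eq_self_iff βt).mp hfixed
  obtain ⟨c, hc⟩ := Submodule.mem_span_singleton.mp hmem
  exact ⟨c, hc.symm⟩
end
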